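/- Let f : ℝ₊ → ℝ₊ be nondecreasing with F(t) = ∫₀ᵗ f(s)ds and N ≥ 3. If there exists a nonnegative nondecreasing C² subsolution y of y'' + ((N−1)/r)y' = f(y) on (0,T) with F(y(0+)) > 0, then ((2^{N−2} − 1)/((N−2)·2^{N−2}))·T ≤ √2·∫_{y(0+)}^∞ du/√(F(u) − F(y(0+))). -/

import Mathlib

open MeasureTheory Filter Topology
open scoped ENNReal

/-- Integrability of `g (y t) * deriv y t`. -/
lemma aux_integrable {g y : ℝ → ℝ} {a b : ℝ} (hab : a ≤ b)
    (hgmono : Monotone g) (hgpos : ∀ x, 0 ≤ g x)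
    (hy'c : ContinuousOn (deriv y) (Set.Icc a b))
    (hy' : ∀ t ∈ Set.Icc a b, 0 ≤ deriv y t)
    (hycont : ContinuousOn y (Set.Icc a b))
    (hmono : MonotoneOn y (Set.Icc a b)) :
    IntegrableOn (fun t => g (y t) * deriv y t) (Set.Ioc a b) := by
  obtain ⟨M, hM⟩ : ∃ M, ∀ t ∈ Set.Icc a b, deriv y t ≤ M := by
    obtain ⟨x, -, hx⟩ := IsCompact.exists_isMaxOn isCompact_Icc (Set.nonempty_Icc.2 hab) hy'c
    exact ⟨deriv y x, hx⟩
  have hmeas : AEStronglyMeasurable (fun t => g (y t) * deriv y t)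
      (volume.restrict (Set.Ioc a b)) := by
    have h1 : AEMeasurable y (volume.restrict (Set.Ioc a b)) :=
      (hycont.mono Set.Ioc_subset_Icc_self).aemeasurable measurableSet_Ioc
    exact ((hgmono.measurable.comp_aemeasurable h1).mul
      (measurable_deriv y).aemeasurable).aestronglyMeasurable
  refine Integrable.mono' (g := fun _ => g (y b) * M) (integrable_const _) hmeas ?_
  rw [ae_restrict_iff' measurableSet_Ioc]
  filter_upwards with t ht
  have ht' : t ∈ Set.Icc a b := Set.Ioc_subset_Icc_self ht
  have h1 : 0 ≤ deriv y t := hy' t ht'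
  have h2 : g (y t) ≤ g (y b) := hgmono (hmono ht' (Set.right_mem_Icc.2 hab) ht'.2)
  have h3 : deriv y t ≤ M := hM t ht'
  rw [Real.norm_eq_abs, abs_of_nonneg (mul_nonneg (hgpos _) h1)]
  exact mul_le_mul h2 h3 h1 (le_trans (hgpos _) h2)

/-- Key change-of-variables inequality: for a monotone `g ≥ 0` and `y` `C¹`-ish monotone,
`∫_{y a}^{y b} g ≤ ∫_a^b g (y t) y'(t) dt`. -/
lemma aux_star {g y : ℝ → ℝ} {a b : ℝ} (hab : a ≤ b)
    (hgmono : Monotone g) (hgpos : ∀ x, 0 ≤ g x)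
    (hy : ∀ t ∈ Set.Icc a b, HasDerivAt y (deriv y t) t)
    (hy' : ∀ t ∈ Set.Icc a b, 0 ≤ deriv y t)
    (hy'c : ContinuousOn (deriv y) (Set.Icc a b))
    (hmono : MonotoneOn y (Set.Icc a b)) :
    (∫ u in (y a)..(y b), g u) ≤ ∫ t in a..b, g (y t) * deriv y t := by
  have hycont : ContinuousOn y (Set.Icc a b) :=
    fun t ht => (hy t ht).continuousAt.continuousWithinAt
  have hyab : y a ≤ y b :=
    hmono (Set.left_mem_Icc.2 hab) (Set.right_mem_Icc.2 hab) hab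
  -- the set where the derivative is positive
  set A : Set ℝ := Set.Ioo a b ∩ deriv y ⁻¹' Set.Ioi 0 with hA
  have hAmeas : MeasurableSet A :=
    measurableSet_Ioo.inter ((measurable_deriv y) measurableSet_Ioi)
  have hAsub : A ⊆ Set.Icc a b := fun x hx => Set.Ioo_subset_Icc_self hx.1
  have hInj : Set.InjOn y A := by
    intro t₁ h₁ t₂ h₂ heq
    by_contra hne
    wlog hlt : t₁ < t₂ generalizing t₁ t₂
    · exact this h₂ h₁ heq.symm (Ne.symm hne) (lt_of_le_of_ne (not_lt.1 hlt) (Ne.symm hne))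
    -- y is constant on [t₁, t₂], so deriv y t₁ = 0, contradiction
    have hconst : ∀ x ∈ Set.Icc t₁ t₂, y x = y t₁ := by
      intro x hx
      have hx1 : x ∈ Set.Icc a b :=
        ⟨le_trans (hAsub h₁).1 hx.1, le_trans hx.2 (hAsub h₂).2⟩
      refine le_antisymm ?_ (hmono (hAsub h₁) hx1 hx.1)
      calc y x ≤ y t₂ := hmono hx1 (hAsub h₂) hx.2
        _ = y t₁ := heq.symm
    have hd0 : HasDerivWithinAt y 0 (Set.Icc t₁ t₂) t₁ := by
      refine (hasDerivWithinAt_const t₁ _ (y t₁)).congr hconst (hconst t₁ ?_)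
      exact Set.left_mem_Icc.2 hlt.le
    have hd1 : HasDerivWithinAt y (deriv y t₁) (Set.Icc t₁ t₂) t₁ :=
      (hy t₁ (hAsub h₁)).hasDerivWithinAt
    have hu : UniqueDiffWithinAt ℝ (Set.Icc t₁ t₂) t₁ :=
      uniqueDiffOn_Icc hlt t₁ (Set.left_mem_Icc.2 hlt.le)
    have : (0 : ℝ) = deriv y t₁ := by
      rw [← hd0.derivWithin hu, ← hd1.derivWithin hu]
    exact absurd h₁.2 (by simp [← this])
  -- Sard for the zero set
  have hnull : volume (y '' (Set.Ioo a b ∩ deriv y ⁻¹' {0})) = 0 := by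
    apply addHaar_image_eq_zero_of_det_fderivWithin_eq_zero volume
      (f' := fun _ => (1 : ℝ →L[ℝ] ℝ).smulRight 0)
    · intro x hx
      have h0 : deriv y x = 0 := hx.2
      have := (hy x (Set.Ioo_subset_Icc_self hx.1)).hasFDerivAt
      rw [h0] at this
      exact this.hasFDerivWithinAt
    · intro x _
      simp [ContinuousLinearMap.det_smulRight]
  -- finite exceptional set
  have hnull2 : volume ({y a, y b} : Set ℝ) = 0 :=
    (Set.toFinite _).measure_zero volume
  -- covering of the image
  have hcover : Set.Ioc (y a) (y b) ⊆
      (y '' A) ∪ ((y '' (Set.Ioo a b ∩ deriv y ⁻¹' {0})) ∪ {y a, y b}) := by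
    intro u hu
    have : u ∈ y '' Set.Icc a b :=
      intermediate_value_Icc hab hycont (Set.Ioc_subset_Icc_self hu)
    obtain ⟨t, ht, rfl⟩ := this
    rcases eq_or_lt_of_le ht.1 with h1 | h1
    · exact Or.inr (Or.inr (by simp [← h1]))
    rcases eq_or_lt_of_le ht.2 with h2 | h2
    · exact Or.inr (Or.inr (by simp [h2]))
    have htoo : t ∈ Set.Ioo a b := ⟨h1, h2⟩
    rcases eq_or_lt_of_le (hy' t ht) with h3 | h3
    · exact Or.inr (Or.inl ⟨t, ⟨htoo, h3.symm⟩, rfl⟩)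
    · exact Or.inl ⟨t, ⟨htoo, h3⟩, rfl⟩
  -- integrability facts
  have hgint : IntegrableOn g (Set.Ioc (y a) (y b)) :=
    (hgmono.intervalIntegrable (a := y a) (b := y b) (μ := volume)).1
  have hprodint : IntegrableOn (fun t => g (y t) * deriv y t) (Set.Ioc a b) :=
    aux_integrable hab hgmono hgpos hy'c hy' hycont hmono
  -- the main chain in ℝ≥0∞
  have hnn0 : ∀ᵐ t ∂(volume.restrict (Set.Ioc a b)), 0 ≤ g (y t) * deriv y t := by
    rw [ae_restrict_iff' measurableSet_Ioc]
    filter_upwards with t ht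
    exact mul_nonneg (hgpos _) (hy' t (Set.Ioc_subset_Icc_self ht))
  have hnn : 0 ≤ᵐ[volume.restrict (Set.Ioc a b)] fun t => g (y t) * deriv y t := hnn0
  have hchain : ENNReal.ofReal (∫ u in Set.Ioc (y a) (y b), g u) ≤
      ENNReal.ofReal (∫ t in Set.Ioc a b, g (y t) * deriv y t) := by
    rw [ofReal_integral_eq_lintegral_ofReal hgint
      (Filter.Eventually.of_forall fun u => hgpos u),
      ofReal_integral_eq_lintegral_ofReal hprodint hnn]
    calc ∫⁻ u in Set.Ioc (y a) (y b), ENNReal.ofReal (g u)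
        ≤ ∫⁻ u in (y '' A) ∪ ((y '' (Set.Ioo a b ∩ deriv y ⁻¹' {0})) ∪ {y a, y b}),
            ENNReal.ofReal (g u) := lintegral_mono_set hcover
      _ ≤ (∫⁻ u in y '' A, ENNReal.ofReal (g u)) +
            ∫⁻ u in (y '' (Set.Ioo a b ∩ deriv y ⁻¹' {0})) ∪ {y a, y b},
            ENNReal.ofReal (g u) := lintegral_union_le _ _ _
      _ = ∫⁻ u in y '' A, ENNReal.ofReal (g u) := by
          have hz : volume ((y '' (Set.Ioo a b ∩ deriv y ⁻¹' {0})) ∪ {y a, y b}) = 0 :=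
            measure_union_null hnull hnull2
          rw [setLIntegral_measure_zero _ _ hz, add_zero]
      _ = ∫⁻ x in A, ENNReal.ofReal |((1 : ℝ →L[ℝ] ℝ).smulRight (deriv y x)).det| *
            ENNReal.ofReal (g (y x)) := by
          exact lintegral_image_eq_lintegral_abs_det_fderiv_mul volume hAmeas
            (fun x hx => ((hy x (hAsub hx)).hasFDerivAt).hasFDerivWithinAt) hInj _
      _ = ∫⁻ x in A, ENNReal.ofReal (g (y x) * deriv y x) := by
          refine setLIntegral_congr_fun hAmeas (fun x hx => ?_)
          rw [ContinuousLinearMap.det_smulRight, ContinuousLinearMap.one_apply, one_mul, abs_of_nonneg (hy' x (hAsub hx)),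
            ← ENNReal.ofReal_mul (hy' x (hAsub hx)), mul_comm]
      _ ≤ ∫⁻ x in Set.Ioc a b, ENNReal.ofReal (g (y x) * deriv y x) :=
          lintegral_mono_set (fun x hx => Set.Ioo_subset_Ioc_self hx.1)
  have hRHSnn : 0 ≤ ∫ t in Set.Ioc a b, g (y t) * deriv y t := by
    refine setIntegral_nonneg measurableSet_Ioc fun t ht => ?_
    exact mul_nonneg (hgpos _) (hy' t (Set.Ioc_subset_Icc_self ht))
  rw [intervalIntegral.integral_of_le hyab, intervalIntegral.integral_of_le hab]
  exact (ENNReal.ofReal_le_ofReal_iff hRHSnn).1 hchain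


set_option maxHeartbeats 2000000

/-- Corollary A.5: existence of a nonnegative nondecreasing subsolution `y` of
`y'' + ((N−1)/r) y' = f(y)` on `(0,T)` with `F(y(0+)) > 0` forces
`((2^{N−2} − 1)/((N−2) 2^{N−2})) T ≤ √2 ∫_{y(0+)}^∞ du/√(F u − F(y(0+)))`. -/
theorem stmt_10 (N : ℕ) (hN : 3 ≤ N)
    (f : ℝ → ℝ) (hfpos : ∀ t, 0 ≤ t → 0 ≤ f t) (hfmono : MonotoneOn f (Set.Ici 0))
    (F : ℝ → ℝ) (hF : ∀ t, F t = ∫ s in (0:ℝ)..t, f s)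
    (T : ℝ) (hT : 0 < T)
    (y : ℝ → ℝ) (hreg : ContDiffOn ℝ 2 y (Set.Ioo 0 T))
    (hypos : ∀ r ∈ Set.Ioo (0:ℝ) T, 0 ≤ y r) (hymono : MonotoneOn y (Set.Ioo 0 T))
    (hsub : ∀ r ∈ Set.Ioo (0:ℝ) T,
      f (y r) ≤ deriv (deriv y) r + (((N : ℝ) - 1) / r) * deriv y r)
    (y0 : ℝ) (hy0 : Tendsto y (nhdsWithin 0 (Set.Ioi 0)) (nhds y0))
    (hF0 : 0 < F y0) :
    ENNReal.ofReal (((2 ^ (N - 2) - 1 : ℝ) / (((N : ℝ) - 2) * 2 ^ (N - 2))) * T) ≤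
      ENNReal.ofReal (Real.sqrt 2) *
        ∫⁻ u in Set.Ioi y0, ENNReal.ofReal (1 / Real.sqrt (F u - F y0)) := by
  -- ## Setup : the monotone extension g of f, and its primitive Fg
  set g : ℝ → ℝ := fun x => f (max x 0) with hgdef
  have hgmono : Monotone g := fun u v huv =>
    hfmono (Set.mem_Ici.2 (le_max_right _ _)) (Set.mem_Ici.2 (le_max_right _ _))
      (max_le_max huv le_rfl)
  have hgpos : ∀ x, 0 ≤ g x := fun x => hfpos _ (le_max_right _ _)
  have hgeq : ∀ x, 0 ≤ x → g x = f x := fun x hx => by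
    simp only [hgdef, max_eq_left hx]
  have hgint : ∀ a b : ℝ, IntervalIntegrable g volume a b := fun a b =>
    hgmono.intervalIntegrable
  set Fg : ℝ → ℝ := fun t => ∫ s in (0:ℝ)..t, g s with hFgdef
  have hFgcont : Continuous Fg := intervalIntegral.continuous_primitive hgint 0
  have hFgF : ∀ t, 0 ≤ t → F t = Fg t := by
    intro t ht
    rw [hF t]
    refine intervalIntegral.integral_congr fun s hs => ?_
    rw [Set.uIcc_of_le ht] at hs
    exact (hgeq s hs.1).symm
  have hFgsub : ∀ u v : ℝ, Fg v - Fg u = ∫ s in u..v, g s := fun u v =>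
    (intervalIntegral.integral_interval_sub_left (hgint 0 v) (hgint 0 u))
  -- ## basic facts about y near 0
  have hIooT : IsOpen (Set.Ioo (0:ℝ) T) := isOpen_Ioo
  have hy00 : 0 ≤ y0 := by
    refine ge_of_tendsto hy0 ?_
    filter_upwards [Ioo_mem_nhdsGT_of_mem (by simp [hT] : (0:ℝ) ∈ Set.Ico (0:ℝ) T)]
      with s hs
    exact hypos s hs
  have hy0le : ∀ r ∈ Set.Ioo (0:ℝ) T, y0 ≤ y r := by
    intro r hr
    refine le_of_tendsto hy0 ?_
    filter_upwards [Ioo_mem_nhdsGT_of_mem (by simp [hr.1] : (0:ℝ) ∈ Set.Ico 0 r)]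
      with s hs
    exact hymono ⟨hs.1, hs.2.trans hr.2⟩ hr hs.2.le
  -- ## the point t₀ with f t₀ > 0 below y0
  obtain ⟨t₀, ht₀0, ht₀y0, hδ⟩ : ∃ t₀, 0 ≤ t₀ ∧ t₀ < y0 ∧ 0 < f t₀ := by
    by_contra hcon
    push_neg at hcon
    have hz : ∀ s ∈ Set.Ioo (0:ℝ) y0, f s = 0 := fun s hs =>
      le_antisymm (hcon s hs.1.le hs.2) (hfpos s hs.1.le)
    rcases eq_or_lt_of_le hy00 with h | h
    · rw [hF, ← h] at hF0
      simp at hF0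
    · rw [hF y0, intervalIntegral.integral_of_le hy00,
        MeasureTheory.integral_Ioc_eq_integral_Ioo] at hF0
      have : ∫ s in Set.Ioo (0:ℝ) y0, f s = ∫ _ in Set.Ioo (0:ℝ) y0, (0:ℝ) :=
        setIntegral_congr_fun measurableSet_Ioo hz
      rw [this] at hF0
      simp at hF0
  set δ : ℝ := f t₀ with hδdef
  have hy0pos : 0 < y0 := lt_of_le_of_lt ht₀0 ht₀y0
  have hglb : ∀ u, t₀ ≤ u → δ ≤ g u := by
    intro u hu
    have : g t₀ ≤ g u := hgmono hu
    rwa [hgeq t₀ ht₀0] at this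
  have hFgrow : ∀ u v : ℝ, t₀ ≤ u → u ≤ v → δ * (v - u) ≤ Fg v - Fg u := by
    intro u v hu huv
    rw [hFgsub u v]
    calc δ * (v - u) = ∫ _ in u..v, δ := by rw [intervalIntegral.integral_const, smul_eq_mul]; ring
      _ ≤ ∫ s in u..v, g s := by
          refine intervalIntegral.integral_mono_on huv intervalIntegrable_const
            (hgint u v) fun s hs => hglb s (hu.trans hs.1)
  -- ## differentiability infrastructure
  have hdy : ∀ r ∈ Set.Ioo (0:ℝ) T, HasDerivAt y (deriv y r) r := by
    intro r hr
    exact ((hreg.differentiableOn (by norm_num)).differentiableAt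
      (hIooT.mem_nhds hr)).hasDerivAt
  have hC1 : ContDiffOn ℝ 1 (deriv y) (Set.Ioo 0 T) :=
    hreg.deriv_of_isOpen hIooT (by norm_num)
  have hdy2 : ∀ r ∈ Set.Ioo (0:ℝ) T, HasDerivAt (deriv y) (deriv (deriv y) r) r := by
    intro r hr
    exact ((hC1.differentiableOn (by norm_num)).differentiableAt
      (hIooT.mem_nhds hr)).hasDerivAt
  have hy'cont : ContinuousOn (deriv y) (Set.Ioo 0 T) := fun r hr =>
    ((hdy2 r hr).continuousAt).continuousWithinAt
  have hy''cont : ContinuousOn (deriv (deriv y)) (Set.Ioo 0 T) :=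
    (hC1.deriv_of_isOpen (m := 0) hIooT (by norm_num)).continuousOn
  have hy'0 : ∀ r ∈ Set.Ioo (0:ℝ) T, 0 ≤ deriv y r := by
    intro r hr
    have h := (hdy r hr).hasDerivWithinAt (s := Set.Ioi r)
    rw [hasDerivWithinAt_iff_tendsto_slope,
      show Set.Ioi r \ {r} = Set.Ioi r from Set.diff_singleton_eq_self (by simp)] at h
    refine ge_of_tendsto h ?_
    filter_upwards [Ioo_mem_nhdsGT_of_mem ⟨le_rfl, hr.2⟩] with t ht
    rw [slope_def_field]
    have htm : t ∈ Set.Ioo (0:ℝ) T := ⟨lt_trans hr.1 ht.1, ht.2⟩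
    have : y r ≤ y t := hymono hr htm ht.1.le
    have h2 : 0 < t - r := by linarith [ht.1]
    rw [div_eq_mul_inv]
    exact mul_nonneg (by linarith) (inv_nonneg.2 h2.le)
  -- ## y is strictly increasing on (0, T)
  have hstrict : ∀ r₁ ∈ Set.Ioo (0:ℝ) T, ∀ r₂ ∈ Set.Ioo (0:ℝ) T, r₁ < r₂ →
      y r₁ < y r₂ := by
    intro r₁ hr₁ r₂ hr₂ h12
    by_contra hle
    push_neg at hle
    have hmem : ∀ t ∈ Set.Ioo r₁ r₂, t ∈ Set.Ioo (0:ℝ) T := fun t ht =>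
      ⟨lt_trans hr₁.1 ht.1, lt_trans ht.2 hr₂.2⟩
    have heq : ∀ t ∈ Set.Ioo r₁ r₂, y t = y r₁ := by
      intro t ht
      refine le_antisymm ?_ (hymono hr₁ (hmem t ht) ht.1.le)
      exact le_trans (hymono (hmem t ht) hr₂ ht.2.le) hle
    have hevc : ∀ t ∈ Set.Ioo r₁ r₂, deriv y t = 0 := by
      intro t ht
      have hev : y =ᶠ[nhds t] fun _ => y r₁ := by
        filter_upwards [Ioo_mem_nhds ht.1 ht.2] with s hs using heq s hs
      rw [hev.deriv_eq, deriv_const]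
    set ρ := (r₁ + r₂) / 2 with hρdef
    have hρ12 : ρ ∈ Set.Ioo r₁ r₂ := ⟨by simp [hρdef]; linarith, by simp [hρdef]; linarith⟩
    have hρm : ρ ∈ Set.Ioo (0:ℝ) T := hmem ρ hρ12
    have hd1 : deriv y ρ = 0 := hevc ρ hρ12
    have hd2 : deriv (deriv y) ρ = 0 := by
      have hev : deriv y =ᶠ[nhds ρ] fun _ => 0 := by
        filter_upwards [Ioo_mem_nhds hρ12.1 hρ12.2] with s hs using hevc s hs
      rw [hev.deriv_eq, deriv_const]
    have hsb := hsub ρ hρm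
    rw [hd1, hd2] at hsb
    have hfyρ : δ ≤ f (y ρ) := by
      rw [← hgeq (y ρ) (hypos ρ hρm)]
      exact hglb (y ρ) (le_trans ht₀y0.le (hy0le ρ hρm))
    simp at hsb
    linarith
  -- ## the energy inequality
  have hTmem : T / 2 ∈ Set.Ioo (0:ℝ) T := ⟨by linarith, by linarith⟩
  set b : ℝ := y (T / 2) with hbdef
  have hby0 : y0 ≤ b := hy0le _ hTmem
  have ht₀b : t₀ ≤ b := (ht₀y0.le).trans hby0
  set P : ℝ := (T / 2) ^ (N - 1) with hPdef
  have hP0 : 0 < P := pow_pos (by linarith) _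
  have hEnergy : ∀ r ∈ Set.Ioo (0:ℝ) T, T / 2 ≤ r →
      2 * P ^ 2 * (Fg (y r) - Fg b) ≤ (r ^ (N - 1) * deriv y r) ^ 2 := by
    intro r hr hr2
    rcases eq_or_lt_of_le hr2 with heq | hlt
    · rw [hbdef, heq]
      simp only [sub_self, mul_zero]
      positivity
    have hIcc : Set.Icc (T / 2) r ⊆ Set.Ioo (0:ℝ) T := fun t ht =>
      ⟨lt_of_lt_of_le hTmem.1 ht.1, lt_of_le_of_lt ht.2 hr.2⟩
    set E' : ℝ → ℝ := fun t => 2 * (t ^ (N - 1) * deriv y t) *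
      (((N - 1 : ℕ) : ℝ) * t ^ (N - 1 - 1) * deriv y t +
        t ^ (N - 1) * deriv (deriv y) t) with hE'def
    have hE : ∀ t ∈ Set.uIcc (T / 2) r,
        HasDerivAt (fun t => (t ^ (N - 1) * deriv y t) ^ 2) (E' t) t := by
      rw [Set.uIcc_of_le hr2]
      intro t ht
      have htm := hIcc ht
      have h1 : HasDerivAt (fun s : ℝ => s ^ (N - 1) * deriv y s)
          (((N - 1 : ℕ) : ℝ) * t ^ (N - 1 - 1) * deriv y t +
            t ^ (N - 1) * deriv (deriv y) t) t :=
        (hasDerivAt_pow (N - 1) t).mul (hdy2 t htm)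
      have h2 := h1.pow 2
      refine HasDerivAt.congr_deriv h2 ?_
      rw [hE'def]
      simp only
      push_cast
      ring
    have hycontIcc : ContinuousOn y (Set.Icc (T / 2) r) := fun t ht =>
      (hdy t (hIcc ht)).continuousAt.continuousWithinAt
    have hy'Icc : ∀ t ∈ Set.Icc (T / 2) r, 0 ≤ deriv y t := fun t ht => hy'0 t (hIcc ht)
    have hE'cont : ContinuousOn E' (Set.uIcc (T / 2) r) := by
      rw [Set.uIcc_of_le hr2]
      have c1 : ContinuousOn (deriv y) (Set.Icc (T / 2) r) := hy'cont.mono hIcc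
      have c2 : ContinuousOn (deriv (deriv y)) (Set.Icc (T / 2) r) := hy''cont.mono hIcc
      exact (continuousOn_const.mul (((continuous_pow (N - 1)).continuousOn).mul c1)).mul
        ((((continuousOn_const.mul ((continuous_pow (N - 1 - 1)).continuousOn)).mul c1)).add
          (((continuous_pow (N - 1)).continuousOn).mul c2))
    have hFTC : ∫ t in (T / 2)..r, E' t =
        (r ^ (N - 1) * deriv y r) ^ 2 - ((T / 2) ^ (N - 1) * deriv y (T / 2)) ^ 2 :=
      intervalIntegral.integral_eq_sub_of_hasDerivAt hE hE'cont.intervalIntegrable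
    have hstar := aux_star (g := g) (y := y) hr2 hgmono hgpos
      (fun t ht => hdy t (hIcc ht)) hy'Icc (hy'cont.mono hIcc) (hymono.mono hIcc)
    have hInt0 : IntegrableOn (fun t => g (y t) * deriv y t) (Set.Ioc (T / 2) r) :=
      aux_integrable hr2 hgmono hgpos (hy'cont.mono hIcc) hy'Icc hycontIcc
        (hymono.mono hIcc)
    have hint1 : IntervalIntegrable (fun t => 2 * P ^ 2 * (g (y t) * deriv y t))
        volume (T / 2) r := by
      refine ⟨hInt0.const_mul (2 * P ^ 2), ?_⟩
      rw [Set.Ioc_eq_empty (by simp; linarith : ¬ r < T / 2)]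
      exact integrableOn_empty
    have hpoint : ∀ t ∈ Set.Icc (T / 2) r,
        2 * P ^ 2 * (g (y t) * deriv y t) ≤ E' t := by
      intro t ht
      have htm := hIcc ht
      have ht0 : 0 < t := htm.1
      have hyt0 : 0 ≤ y t := hypos t htm
      have hfg : g (y t) = f (y t) := hgeq _ hyt0
      have hsb := hsub t htm
      have hy't : 0 ≤ deriv y t := hy'0 t htm
      have hq : 0 < t ^ (N - 2) := pow_pos ht0 _
      have hf0 : 0 ≤ f (y t) := hfpos _ hyt0
      have hpow : t ^ (N - 1) = t ^ (N - 2) * t := by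
        rw [← pow_succ]
        congr 1
        omega
      have hpow' : t ^ (N - 1 - 1) = t ^ (N - 2) := by
        rw [show N - 1 - 1 = N - 2 from by omega]
      have hcast : ((N - 1 : ℕ) : ℝ) = (N : ℝ) - 1 := by
        rw [Nat.cast_sub (by omega)]; norm_num
      have hPle : P ≤ t ^ (N - 1) := pow_le_pow_left₀ (by linarith) ht.1 _
      have hkey1 : t * f (y t) ≤ t * deriv (deriv y) t + ((N : ℝ) - 1) * deriv y t := by
        have h := mul_le_mul_of_nonneg_left hsb ht0.le
        have h2 : t * (((N : ℝ) - 1) / t * deriv y t) = ((N : ℝ) - 1) * deriv y t := by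
          field_simp
        nlinarith [h, h2]
      have hkey2 := mul_le_mul_of_nonneg_left hkey1 ht0.le
      rw [hpow] at hPle
      simp only [hE'def]
      rw [hfg, hpow, hpow', hcast]
      have h1 := mul_le_mul_of_nonneg_left hkey2
        (by positivity : (0:ℝ) ≤ 2 * t ^ (N - 2) * t ^ (N - 2) * deriv y t)
      have h2 := mul_le_mul_of_nonneg_right
        (mul_self_le_mul_self hP0.le hPle) (mul_nonneg hf0 hy't)
      nlinarith [h1, h2]
    have hmono2 : (∫ t in (T / 2)..r, 2 * P ^ 2 * (g (y t) * deriv y t)) ≤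
        ∫ t in (T / 2)..r, E' t :=
      intervalIntegral.integral_mono_on hr2 hint1 hE'cont.intervalIntegrable hpoint
    have hconstmul : (∫ t in (T / 2)..r, 2 * P ^ 2 * (g (y t) * deriv y t)) =
        2 * P ^ 2 * ∫ t in (T / 2)..r, g (y t) * deriv y t :=
      intervalIntegral.integral_const_mul _ _
    have h2P : (0:ℝ) ≤ 2 * P ^ 2 := by positivity
    have hs1 : 2 * P ^ 2 * (Fg (y r) - Fg b) ≤
        2 * P ^ 2 * ∫ t in (T / 2)..r, g (y t) * deriv y t := by
      refine mul_le_mul_of_nonneg_left ?_ h2P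
      rw [hbdef, hFgsub (y (T / 2)) (y r)]
      exact hstar
    nlinarith [sq_nonneg ((T / 2) ^ (N - 1) * deriv y (T / 2)), hs1, hmono2, hconstmul, hFTC]
  -- ## strict positivity above b
  have hyb : ∀ r ∈ Set.Ioo (T / 2) T, b < y r := fun r hr =>
    hstrict (T / 2) hTmem r ⟨lt_trans hTmem.1 hr.1, hr.2⟩ hr.1
  have hΔpos : ∀ v, b < v → 0 < Fg v - Fg b := by
    intro v hv
    have := hFgrow b v ht₀b hv.le
    nlinarith
  -- ## the function Φ
  set w : ℝ → ℝ := fun v => (Real.sqrt (2 * (Fg v - Fg b)))⁻¹ with hwdef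
  have hwpos : ∀ v, b < v → 0 < w v := by
    intro v hv
    exact inv_pos.2 (Real.sqrt_pos.2 (by have := hΔpos v hv; linarith))
  have hwnonneg : ∀ v, 0 ≤ w v := fun v => inv_nonneg.2 (Real.sqrt_nonneg _)
  have hwcont : ContinuousOn w (Set.Ioi b) := by
    refine ContinuousOn.inv₀ (Continuous.continuousOn
      (Real.continuous_sqrt.comp (continuous_const.mul (hFgcont.sub continuous_const)))) ?_
    intro v hv
    exact ne_of_gt (Real.sqrt_pos.2 (by have := hΔpos v hv; linarith))
  have h34 : (3 * T / 4 : ℝ) ∈ Set.Ioo (0:ℝ) T := ⟨by linarith, by linarith⟩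
  set a₀ : ℝ := y (3 * T / 4) with ha₀def
  have hba₀ : b < a₀ := hstrict _ hTmem _ h34 (by linarith)
  set Φ : ℝ → ℝ := fun u => ∫ v in a₀..u, w v with hΦdef
  have hwint : ∀ u₁ u₂ : ℝ, b < u₁ → b < u₂ → IntervalIntegrable w volume u₁ u₂ := by
    intro u₁ u₂ h₁ h₂
    refine ContinuousOn.intervalIntegrable (hwcont.mono ?_)
    intro x hx
    exact lt_of_lt_of_le (lt_min h₁ h₂) hx.1
  have hwmeas : Measurable w := by
    refine Measurable.inv ?_
    exact (Real.continuous_sqrt.comp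
      (continuous_const.mul (hFgcont.sub continuous_const))).measurable
  have hΦderiv : ∀ u, b < u → HasDerivAt Φ (w u) u := by
    intro u hu
    refine intervalIntegral.integral_hasDerivAt_right (hwint a₀ u hba₀ hu)
      ⟨Set.univ, Filter.univ_mem, hwmeas.aestronglyMeasurable⟩ ?_
    exact hwcont.continuousAt (isOpen_Ioi.mem_nhds hu)
  have hΦsub : ∀ u₁ u₂, b < u₁ → b < u₂ → Φ u₂ - Φ u₁ = ∫ v in u₁..u₂, w v := by
    intro u₁ u₂ h₁ h₂
    exact intervalIntegral.integral_interval_sub_left (hwint a₀ u₂ hba₀ h₂)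
      (hwint a₀ u₁ hba₀ h₁)
  -- ## the comparison function A
  set A : ℝ → ℝ := fun t => -(P / (N - 2 : ℕ)) * ((t ^ (N - 2))⁻¹) with hAdef
  have hA : ∀ t, 0 < t → HasDerivAt A (P * (t ^ (N - 1))⁻¹) t := by
    intro t ht
    have htne : t ≠ 0 := ne_of_gt ht
    have h1 : HasDerivAt (fun s : ℝ => (s ^ (N - 2))⁻¹)
        (-(((N - 2 : ℕ) : ℝ) * t ^ (N - 2 - 1)) / (t ^ (N - 2)) ^ 2) t :=
      (hasDerivAt_pow (N - 2) t).inv (pow_ne_zero _ htne)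
    have h2 := h1.const_mul (-(P / ((N - 2 : ℕ) : ℝ)))
    refine HasDerivAt.congr_deriv h2 ?_
    have hcastne : ((N - 2 : ℕ) : ℝ) ≠ 0 := Nat.cast_ne_zero.2 (by omega)
    have he1 : (t ^ (N - 2)) ^ 2 = t ^ (N - 1) * t ^ (N - 2 - 1) := by
      rw [← pow_mul, ← pow_add]
      congr 1
      omega
    rw [he1]
    have hne1 : t ^ (N - 1) ≠ 0 := pow_ne_zero _ htne
    have hne2 : t ^ (N - 2 - 1) ≠ 0 := pow_ne_zero _ htne
    field_simp
  -- ## H = Φ ∘ y - A is monotone on (T/2, T)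
  have hHmono : ∀ r₀ ∈ Set.Ioo (T / 2) T, ∀ r₁ ∈ Set.Ioo (T / 2) T, r₀ ≤ r₁ →
      A r₁ - A r₀ ≤ Φ (y r₁) - Φ (y r₀) := by
    have hHd : ∀ ρ ∈ Set.Ioo (T / 2) T, HasDerivAt (fun ρ => Φ (y ρ) - A ρ)
        (w (y ρ) * deriv y ρ - P * (ρ ^ (N - 1))⁻¹) ρ := by
      intro ρ hρ
      have hρm : ρ ∈ Set.Ioo (0:ℝ) T := ⟨lt_trans hTmem.1 hρ.1, hρ.2⟩
      exact ((hΦderiv (y ρ) (hyb ρ hρ)).comp ρ (hdy ρ hρm)).sub (hA ρ hρm.1)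
    have hH0 : ∀ ρ ∈ Set.Ioo (T / 2) T,
        0 ≤ w (y ρ) * deriv y ρ - P * (ρ ^ (N - 1))⁻¹ := by
      intro ρ hρ
      have hρm : ρ ∈ Set.Ioo (0:ℝ) T := ⟨lt_trans hTmem.1 hρ.1, hρ.2⟩
      have hΔ : 0 < Fg (y ρ) - Fg b := hΔpos (y ρ) (hyb ρ hρ)
      have hE := hEnergy ρ hρm hρ.1.le
      have hρpow : 0 < ρ ^ (N - 1) := pow_pos hρm.1 _
      have h2Δ : 0 < 2 * (Fg (y ρ) - Fg b) := by linarith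
      have hspos : 0 < Real.sqrt (2 * (Fg (y ρ) - Fg b)) := Real.sqrt_pos.2 h2Δ
      have hsq : Real.sqrt (2 * (Fg (y ρ) - Fg b)) * P ≤ ρ ^ (N - 1) * deriv y ρ := by
        have h1 : Real.sqrt (2 * P ^ 2 * (Fg (y ρ) - Fg b)) ≤
            Real.sqrt ((ρ ^ (N - 1) * deriv y ρ) ^ 2) := Real.sqrt_le_sqrt hE
        rw [Real.sqrt_sq (mul_nonneg hρpow.le (hy'0 ρ hρm))] at h1
        rw [show 2 * P ^ 2 * (Fg (y ρ) - Fg b) = (2 * (Fg (y ρ) - Fg b)) * P ^ 2 by ring,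
          Real.sqrt_mul h2Δ.le, Real.sqrt_sq hP0.le] at h1
        exact h1
      rw [sub_nonneg, hwdef]
      simp only
      rw [mul_comm (Real.sqrt (2 * (Fg (y ρ) - Fg b)))⁻¹ (deriv y ρ),
        ← div_eq_mul_inv, ← div_eq_mul_inv, div_le_div_iff₀ hρpow hspos]
      nlinarith
    intro r₀ hr₀ r₁ hr₁ h01
    have hmono := monotoneOn_of_deriv_nonneg (convex_Ioo (T / 2) T)
      (fun ρ hρ => (hHd ρ hρ).continuousAt.continuousWithinAt)
      (fun ρ hρ => ((hHd ρ (by rwa [interior_Ioo] at hρ)).differentiableAt).differentiableWithinAt)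
      (fun ρ hρ => by
        rw [interior_Ioo] at hρ
        rw [(hHd ρ hρ).deriv]
        exact hH0 ρ hρ)
    have := hmono hr₀ hr₁ h01
    simp only at this
    linarith
  -- ## the shift lemma
  have hshift : (∫⁻ v in Set.Ioi b, ENNReal.ofReal ((Real.sqrt (Fg v - Fg b))⁻¹)) ≤
      ∫⁻ v in Set.Ioi y0, ENNReal.ofReal ((Real.sqrt (Fg v - Fg y0))⁻¹) := by
    set c₀ : ℝ := b - y0 with hc₀def
    have hc₀0 : 0 ≤ c₀ := by simp [hc₀def]; linarith
    have hbc : b = y0 + c₀ := by rw [hc₀def]; ring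
    set k : ℝ → ℝ≥0∞ := fun v => ENNReal.ofReal ((Real.sqrt (Fg v - Fg b))⁻¹) with hkdef
    calc (∫⁻ v in Set.Ioi b, k v)
        = ∫⁻ v, (Set.Ioi b).indicator k v := (lintegral_indicator measurableSet_Ioi _).symm
      _ = ∫⁻ v, (Set.Ioi b).indicator k (v + c₀) :=
          (lintegral_add_right_eq_self ((Set.Ioi b).indicator k) c₀).symm
      _ = ∫⁻ v, (Set.Ioi y0).indicator (fun v => k (v + c₀)) v := by
          congr 1
          funext v
          simp only [Set.indicator_apply, Set.mem_Ioi]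
          exact if_congr ⟨fun h => by linarith, fun h => by linarith⟩ rfl rfl
      _ = ∫⁻ v in Set.Ioi y0, k (v + c₀) := lintegral_indicator measurableSet_Ioi _
      _ ≤ ∫⁻ v in Set.Ioi y0, ENNReal.ofReal ((Real.sqrt (Fg v - Fg y0))⁻¹) := by
          refine lintegral_mono_ae ?_
          rw [ae_restrict_iff' measurableSet_Ioi]
          filter_upwards with v hv
          rw [hkdef]
          refine ENNReal.ofReal_le_ofReal ?_
          have h1 : 0 < Fg v - Fg y0 := by
            have := hFgrow y0 v ht₀y0.le (le_of_lt hv)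
            have hv' : (0:ℝ) < v - y0 := by simpa using sub_pos.2 (Set.mem_Ioi.1 hv)
            nlinarith
          have h2 : Fg v - Fg y0 ≤ Fg (v + c₀) - Fg b := by
            rw [hbc, hFgsub y0 v, hFgsub (y0 + c₀) (v + c₀),
              ← intervalIntegral.integral_comp_add_right (fun s => g s) c₀]
            refine intervalIntegral.integral_mono_on (le_of_lt hv) (hgint y0 v)
              ((hgmono.comp (monotone_id.add_const c₀)).intervalIntegrable) ?_
            intro s _
            exact hgmono (by linarith)
          exact inv_anti₀ (Real.sqrt_pos.2 h1) (Real.sqrt_le_sqrt h2)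
  -- ## identification of the goal integral
  set I : ℝ≥0∞ := ∫⁻ u in Set.Ioi y0, ENNReal.ofReal (1 / Real.sqrt (F u - F y0)) with hIdef
  have hIeq : I = ∫⁻ v in Set.Ioi y0, ENNReal.ofReal ((Real.sqrt (Fg v - Fg y0))⁻¹) := by
    refine setLIntegral_congr_fun measurableSet_Ioi
      (fun u hu => ?_)
    rw [one_div, hFgF u (hy00.trans (le_of_lt hu)), hFgF y0 hy00]
  -- ## KEY inequality for interior r₀ ≤ r₁
  have hKEY : ∀ r₀ ∈ Set.Ioo (T / 2) T, ∀ r₁ ∈ Set.Ioo (T / 2) T, r₀ ≤ r₁ →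
      ENNReal.ofReal (A r₁ - A r₀) ≤ ENNReal.ofReal ((Real.sqrt 2)⁻¹) * I := by
    intro r₀ hr₀ r₁ hr₁ h01
    have hmem₀ : r₀ ∈ Set.Ioo (0:ℝ) T := ⟨lt_trans hTmem.1 hr₀.1, hr₀.2⟩
    have hmem₁ : r₁ ∈ Set.Ioo (0:ℝ) T := ⟨lt_trans hTmem.1 hr₁.1, hr₁.2⟩
    have hy01 : y r₀ ≤ y r₁ := hymono hmem₀ hmem₁ h01
    have hb0 : b < y r₀ := hyb r₀ hr₀
    have hb1 : b < y r₁ := hyb r₁ hr₁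
    calc ENNReal.ofReal (A r₁ - A r₀)
        ≤ ENNReal.ofReal (∫ v in (y r₀)..(y r₁), w v) := by
          refine ENNReal.ofReal_le_ofReal ?_
          rw [← hΦsub (y r₀) (y r₁) hb0 hb1]
          exact hHmono r₀ hr₀ r₁ hr₁ h01
      _ = ∫⁻ v in Set.Ioc (y r₀) (y r₁), ENNReal.ofReal (w v) := by
          rw [intervalIntegral.integral_of_le hy01,
            ofReal_integral_eq_lintegral_ofReal (hwint (y r₀) (y r₁) hb0 hb1).1
              (Filter.Eventually.of_forall fun v => hwnonneg v)]
      _ ≤ ∫⁻ v in Set.Ioi b, ENNReal.ofReal (w v) :=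
          lintegral_mono_set (fun x hx => lt_trans hb0 hx.1)
      _ = ∫⁻ v in Set.Ioi b, ENNReal.ofReal ((Real.sqrt 2)⁻¹) *
            ENNReal.ofReal ((Real.sqrt (Fg v - Fg b))⁻¹) := by
          refine setLIntegral_congr_fun measurableSet_Ioi
            (fun v hv => ?_)
          rw [hwdef]
          simp only
          rw [Real.sqrt_mul (by norm_num : (0:ℝ) ≤ 2), mul_inv,
            ENNReal.ofReal_mul (by positivity)]
      _ = ENNReal.ofReal ((Real.sqrt 2)⁻¹) *
            ∫⁻ v in Set.Ioi b, ENNReal.ofReal ((Real.sqrt (Fg v - Fg b))⁻¹) := by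
          refine lintegral_const_mul _ ?_
          refine ENNReal.measurable_ofReal.comp (Measurable.inv ?_)
          exact (Real.continuous_sqrt.comp (hFgcont.sub continuous_const)).measurable
      _ ≤ ENNReal.ofReal ((Real.sqrt 2)⁻¹) * I := by
          rw [hIeq]
          exact mul_le_mul_right hshift _
  -- ## pass to the limit
  have hlimit : ENNReal.ofReal (A T - A (T / 2)) ≤ ENNReal.ofReal ((Real.sqrt 2)⁻¹) * I := by
    set η : ℕ → ℝ := fun j => (T / 4) / (j + 1) with hηdef
    have hη0 : ∀ j, 0 < η j := fun j => by positivity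
    have hη4 : ∀ j : ℕ, η j ≤ T / 4 := by
      intro j
      rw [hηdef]
      refine div_le_self (by linarith) ?_
      have : (0:ℝ) ≤ (j : ℝ) := Nat.cast_nonneg j
      linarith
    have hr₀mem : ∀ j : ℕ, T / 2 + η j ∈ Set.Ioo (T / 2) T := fun j =>
      ⟨by linarith [hη0 j], by linarith [hη4 j]⟩
    have hr₁mem : ∀ j : ℕ, T - η j ∈ Set.Ioo (T / 2) T := fun j =>
      ⟨by linarith [hη4 j], by linarith [hη0 j]⟩
    have hle : ∀ j : ℕ, T / 2 + η j ≤ T - η j := fun j => by linarith [hη4 j]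
    have hηto : Tendsto η atTop (nhds 0) := by
      have h1 : Tendsto (fun j : ℕ => (1:ℝ) / (j + 1)) atTop (nhds 0) :=
        tendsto_one_div_add_atTop_nhds_zero_nat
      have h2 := h1.const_mul (T / 4)
      simp only [mul_zero] at h2
      refine h2.congr fun j => ?_
      rw [hηdef]
      ring
    have hAcont : ∀ t : ℝ, t ≠ 0 → ContinuousAt A t := by
      intro t ht
      rw [hAdef]
      exact continuousAt_const.mul (((continuous_pow (N - 2)).continuousAt).inv₀
        (pow_ne_zero _ ht))
    have htendsto : Tendsto (fun j : ℕ => A (T - η j) - A (T / 2 + η j)) atTop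
        (nhds (A T - A (T / 2))) := by
      have h1 : Tendsto (fun j : ℕ => T - η j) atTop (nhds T) := by
        have := tendsto_const_nhds (x := T) (f := atTop (α := ℕ)) |>.sub hηto
        simpa using this
      have h2 : Tendsto (fun j : ℕ => T / 2 + η j) atTop (nhds (T / 2)) := by
        have := tendsto_const_nhds (x := T / 2) (f := atTop (α := ℕ)) |>.add hηto
        simpa using this
      exact ((hAcont T (ne_of_gt hT)).tendsto.comp h1).sub
        ((hAcont (T / 2) (by positivity)).tendsto.comp h2)
    refine le_of_tendsto ((ENNReal.continuous_ofReal.tendsto _).comp htendsto) ?_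
    filter_upwards with j
    exact hKEY _ (hr₀mem j) _ (hr₁mem j) (hle j)
  -- ## conclusion
  have hconst : (((2 ^ (N - 2) - 1 : ℝ) / (((N : ℝ) - 2) * 2 ^ (N - 2))) * T) =
      2 * (A T - A (T / 2)) := by
    have hcast : ((N - 2 : ℕ) : ℝ) = (N : ℝ) - 2 := by
      rw [Nat.cast_sub (by omega)]
      norm_num
    have hNn : N - 1 = (N - 2) + 1 := by omega
    have hTne : (T : ℝ) ≠ 0 := ne_of_gt hT
    have h2ne : ((2 : ℝ)) ^ (N - 2) ≠ 0 := by positivity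
    have hTn : (T : ℝ) ^ (N - 2) ≠ 0 := pow_ne_zero _ hTne
    have hcastne : ((N : ℝ) - 2) ≠ 0 := by
      have : (3 : ℝ) ≤ (N : ℝ) := by exact_mod_cast hN
      linarith
    rw [hAdef, hPdef, hNn]
    simp only [hcast]
    rw [div_pow (T : ℝ) 2 (N - 2), pow_succ, div_pow (T : ℝ) 2 (N - 2)]
    field_simp
    ring
  calc ENNReal.ofReal (((2 ^ (N - 2) - 1 : ℝ) / (((N : ℝ) - 2) * 2 ^ (N - 2))) * T)
      = ENNReal.ofReal 2 * ENNReal.ofReal (A T - A (T / 2)) := by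
        rw [hconst, ENNReal.ofReal_mul (by norm_num)]
    _ ≤ ENNReal.ofReal 2 * (ENNReal.ofReal ((Real.sqrt 2)⁻¹) * I) := by
        exact mul_le_mul_right hlimit _
    _ = (ENNReal.ofReal 2 * ENNReal.ofReal ((Real.sqrt 2)⁻¹)) * I := by rw [mul_assoc]
    _ = ENNReal.ofReal (Real.sqrt 2) * I := by
        rw [← ENNReal.ofReal_mul (by norm_num)]
        congr 1
        have h2 : Real.sqrt 2 * Real.sqrt 2 = 2 := Real.mul_self_sqrt (by norm_num)
        have hs2 : (0:ℝ) < Real.sqrt 2 := Real.sqrt_pos.2 (by norm_num)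
        field_simp
        congr 1
        rw [div_eq_iff hs2.ne', h2]
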